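/- Let q = g⟨nk⟩_0 and ξ⃗ = (ξ_1, …, ξ_{nk}) ∈ q^* with ξ_i ∈ g_{ī}. If the element (x_0,…,x_{nk−1}) ∈ q stabilizes ξ⃗(t) = (ξ_1, tξ_2, …, t^{nk−1}ξ_{nk}) for some t ≠ 0, then (t^{nk−1}x_0, t^{nk−2}x_1, …, x_{nk−1}) stabilizes ξ⃗; consequently, if (ξ_1,0,…,0) is a regular element of q^*, then all ξ⃗(t), including ξ⃗ itself, are regular elements of q^*. -/

import Mathlib

open Finset Module

section Defs

variable {𝕜 L : Type*} [Field 𝕜] [LieRing L] [LieAlgebra 𝕜 L]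

/-- The bracket of the Takiff algebra `q⟨m⟩`, modelled on `Fin m → L`:
`[x⃗,y⃗]ₗ = ∑_{i+j=l} [xᵢ,yⱼ]`. -/
def takiffBracket (m : ℕ) (x y : Fin m → L) : Fin m → L :=
  fun l => ∑ i : Fin m, ∑ j : Fin m,
    if (i : ℕ) + (j : ℕ) = (l : ℕ) then ⁅x i, y j⁆ else 0

lemma takiffBracket_zero_left (m : ℕ) (y : Fin m → L) :
    takiffBracket m 0 y = 0 := by
  funext l; simp [takiffBracket]

lemma takiffBracket_add_left (m : ℕ) (x x' y : Fin m → L) :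
    takiffBracket m (x + x') y = takiffBracket m x y + takiffBracket m x' y := by
  funext l
  simp only [takiffBracket, Pi.add_apply]
  rw [← Finset.sum_add_distrib]
  refine Finset.sum_congr rfl fun i _ => ?_
  rw [← Finset.sum_add_distrib]
  refine Finset.sum_congr rfl fun j _ => ?_
  split <;> simp [add_lie]

lemma takiffBracket_smul_left (m : ℕ) (c : 𝕜) (x y : Fin m → L) :
    takiffBracket m (c • x) y = c • takiffBracket m x y := by
  funext l
  simp only [takiffBracket, Pi.smul_apply, Finset.smul_sum]
  refine Finset.sum_congr rfl fun i _ => ?_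
  refine Finset.sum_congr rfl fun j _ => ?_
  split <;> simp [smul_lie]

/-- The stabiliser (w.r.t. the coadjoint representation) of a linear functional `ξ`
in the Lie algebra given by the subspace `Sm` of the Takiff algebra `q⟨m⟩`, endowed
with the truncated bracket. -/
def coadjointStabilizer (m : ℕ) (Sm : Submodule 𝕜 (Fin m → L))
    (ξ : (Fin m → L) →ₗ[𝕜] 𝕜) : Submodule 𝕜 (Fin m → L) where
  carrier := {v | v ∈ Sm ∧ ∀ w ∈ Sm, ξ (takiffBracket m v w) = 0}
  zero_mem' := ⟨Sm.zero_mem, fun w _ => by rw [takiffBracket_zero_left, map_zero]⟩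
  add_mem' := fun ha hb => ⟨Sm.add_mem ha.1 hb.1, fun w hw => by
    rw [takiffBracket_add_left, map_add, ha.2 w hw, hb.2 w hw, add_zero]⟩
  smul_mem' := fun c a ha => ⟨Sm.smul_mem c ha.1, fun w hw => by
    rw [takiffBracket_smul_left, map_smul, ha.2 w hw, smul_zero]⟩

/-- The fixed-point subalgebra `g⟨m⟩₀ = g₀ ⋉ g₁ ⋉ …` of `θ̂` inside the Takiff algebra
`g⟨m⟩`: tuples whose `i`-th entry lies in the `ζⁱ`-eigenspace of `θ`. -/
noncomputable def takiffFixedSubalgebra (m : ℕ) (θ : Module.End 𝕜 L) (ζ : 𝕜) :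
    Submodule 𝕜 (Fin m → L) :=
  LinearMap.ker (LinearMap.pi
    (fun i : Fin m => (θ - ζ ^ (i : ℕ) • LinearMap.id) ∘ₗ LinearMap.proj i))

/-- The identification `q^* ≅ g⟨m⟩₁` : the tuple `η = (ξ₁, …, ξ_m)` (with `ξ_j ∈ g_j`)
defines the linear functional `v ↦ ∑ᵢ b(vᵢ, η_{m−1−i})` via the invariant form `b`. -/
noncomputable def pairingFunctional (b : L →ₗ[𝕜] L →ₗ[𝕜] 𝕜) (m : ℕ) (η : Fin m → L) :
    (Fin m → L) →ₗ[𝕜] 𝕜 where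
  toFun v := ∑ i : Fin m, b (v i) (η i.rev)
  map_add' u v := by simp [← Finset.sum_add_distrib]
  map_smul' c v := by simp [Finset.mul_sum]

/-- `ξ` is a regular element of `q^*`: its coadjoint stabiliser in the Lie algebra
`Sm` (with the truncated Takiff bracket) has minimal dimension. -/
def IsCoadjointRegular (m : ℕ) (Sm : Submodule 𝕜 (Fin m → L))
    (ξ : (Fin m → L) →ₗ[𝕜] 𝕜) : Prop :=
  ∀ ξ' : (Fin m → L) →ₗ[𝕜] 𝕜,
    finrank 𝕜 (coadjointStabilizer m Sm ξ) ≤ finrank 𝕜 (coadjointStabilizer m Sm ξ')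

end Defs

section Aux

variable {𝕜 L : Type*} [Field 𝕜] [LieRing L] [LieAlgebra 𝕜 L]

lemma takiffBracket_zero_right (m : ℕ) (x : Fin m → L) :
    takiffBracket m x 0 = 0 := by
  funext l; simp [takiffBracket]

lemma takiffBracket_add_right (m : ℕ) (x y y' : Fin m → L) :
    takiffBracket m x (y + y') = takiffBracket m x y + takiffBracket m x y' := by
  funext l
  simp only [takiffBracket, Pi.add_apply]
  rw [← Finset.sum_add_distrib]
  refine Finset.sum_congr rfl fun i _ => ?_
  rw [← Finset.sum_add_distrib]
  refine Finset.sum_congr rfl fun j _ => ?_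
  split <;> simp [lie_add]

lemma takiffBracket_smul_right (m : ℕ) (c : 𝕜) (x y : Fin m → L) :
    takiffBracket m x (c • y) = c • takiffBracket m x y := by
  funext l
  simp only [takiffBracket, Pi.smul_apply, Finset.smul_sum]
  refine Finset.sum_congr rfl fun i _ => ?_
  refine Finset.sum_congr rfl fun j _ => ?_
  split <;> simp [lie_smul]

lemma mem_takiffFixed_iff (m : ℕ) (θ : Module.End 𝕜 L) (ζ : 𝕜) (v : Fin m → L) :
    v ∈ takiffFixedSubalgebra m θ ζ ↔ ∀ i : Fin m, θ (v i) = ζ ^ (i : ℕ) • v i := by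
  simp [takiffFixedSubalgebra, LinearMap.mem_ker, LinearMap.ext_iff, funext_iff,
    sub_eq_zero, LinearMap.sub_apply, LinearMap.smul_apply]

lemma smul_mem_takiffFixed (m : ℕ) (θ : Module.End 𝕜 L) (ζ : 𝕜) (c : Fin m → 𝕜)
    {v : Fin m → L} (hv : v ∈ takiffFixedSubalgebra m θ ζ) :
    (fun i => c i • v i) ∈ takiffFixedSubalgebra m θ ζ := by
  rw [mem_takiffFixed_iff] at hv ⊢
  intro i
  rw [map_smul, hv i, smul_comm]

lemma pairing_bracket (b : L →ₗ[𝕜] L →ₗ[𝕜] 𝕜) (m : ℕ) (η : Fin m → L)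
    (x y : Fin m → L) :
    pairingFunctional b m η (takiffBracket m x y) =
      ∑ l : Fin m, ∑ i : Fin m, ∑ j : Fin m,
        if (i : ℕ) + (j : ℕ) = (l : ℕ) then b ⁅x i, y j⁆ (η l.rev) else 0 := by
  simp only [pairingFunctional, LinearMap.coe_mk, AddHom.coe_mk, takiffBracket,
    map_sum, LinearMap.sum_apply]
  refine Finset.sum_congr rfl fun l _ => Finset.sum_congr rfl fun i _ =>
    Finset.sum_congr rfl fun j _ => ?_
  split <;> simp

/-- Key rescaling lemma (part 1, for arbitrary `t` and `η`). -/
lemma stab_rescale (m : ℕ) (θ : Module.End 𝕜 L) (ζ : 𝕜) (b : L →ₗ[𝕜] L →ₗ[𝕜] 𝕜)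
    (η : Fin m → L) (t : 𝕜) (v : Fin m → L)
    (hv : v ∈ coadjointStabilizer m (takiffFixedSubalgebra m θ ζ)
      (pairingFunctional b m (fun j => t ^ (j : ℕ) • η j))) :
    (fun i : Fin m => t ^ (m - 1 - (i : ℕ)) • v i) ∈
      coadjointStabilizer m (takiffFixedSubalgebra m θ ζ) (pairingFunctional b m η) := by
  obtain ⟨hvS, hstab⟩ := hv
  refine ⟨smul_mem_takiffFixed m θ ζ _ hvS, ?_⟩
  intro w hw
  have hw' : (fun j : Fin m => t ^ (j : ℕ) • w j) ∈ takiffFixedSubalgebra m θ ζ :=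
    smul_mem_takiffFixed m θ ζ _ hw
  have h0 := hstab _ hw'
  rw [pairing_bracket] at h0 ⊢
  refine Eq.trans ?_ h0
  refine Finset.sum_congr rfl fun l _ => Finset.sum_congr rfl fun i _ =>
    Finset.sum_congr rfl fun j _ => ?_
  split
  · rename_i hij
    have hpow : m - 1 - (i : ℕ) = (j : ℕ) + (m - ((l : ℕ) + 1)) := by
      have := l.isLt; omega
    simp only [smul_lie, lie_smul, map_smul, LinearMap.smul_apply, smul_eq_mul,
      Fin.val_rev]
    rw [hpow, pow_add]
    ring
  · rfl

end Aux

section Aux2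

variable {𝕜 L : Type*} [Field 𝕜] [LieRing L] [LieAlgebra 𝕜 L]

/-- The map `v ↦ ξ([v, ·])` as a bilinear map on the subalgebra `S`. -/
noncomputable def stabMap (m : ℕ) (S : Submodule 𝕜 (Fin m → L))
    (ξ : (Fin m → L) →ₗ[𝕜] 𝕜) : ↥S →ₗ[𝕜] (↥S →ₗ[𝕜] 𝕜) :=
  LinearMap.mk₂ 𝕜 (fun v w => ξ (takiffBracket m ↑v ↑w))
    (fun v v' w => by
      show ξ (takiffBracket m ↑(v + v') ↑w) = _
      rw [Submodule.coe_add, takiffBracket_add_left, map_add])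
    (fun c v w => by
      show ξ (takiffBracket m ↑(c • v) ↑w) = c • ξ (takiffBracket m ↑v ↑w)
      rw [Submodule.coe_smul, takiffBracket_smul_left, map_smul])
    (fun v w w' => by
      show ξ (takiffBracket m ↑v ↑(w + w')) = _
      rw [Submodule.coe_add, takiffBracket_add_right, map_add])
    (fun c v w => by
      show ξ (takiffBracket m ↑v ↑(c • w)) = c • ξ (takiffBracket m ↑v ↑w)
      rw [Submodule.coe_smul, takiffBracket_smul_right, map_smul])

lemma stabMap_apply (m : ℕ) (S : Submodule 𝕜 (Fin m → L))
    (ξ : (Fin m → L) →ₗ[𝕜] 𝕜) (v w : ↥S) :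
    stabMap m S ξ v w = ξ (takiffBracket m ↑v ↑w) := rfl

lemma stab_eq_map (m : ℕ) (S : Submodule 𝕜 (Fin m → L)) (ξ : (Fin m → L) →ₗ[𝕜] 𝕜) :
    coadjointStabilizer m S ξ = (LinearMap.ker (stabMap m S ξ)).map S.subtype := by
  ext x
  rw [Submodule.mem_map]
  constructor
  · rintro ⟨hxS, h⟩
    refine ⟨⟨x, hxS⟩, ?_, rfl⟩
    rw [LinearMap.mem_ker]
    ext w
    exact h ↑w w.2
  · rintro ⟨⟨x, hxS⟩, hker, rfl⟩
    rw [LinearMap.mem_ker] at hker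
    refine ⟨hxS, fun w hw => ?_⟩
    have := congrArg (fun f => f ⟨w, hw⟩) hker
    simpa [stabMap_apply] using this

set_option synthInstance.maxHeartbeats 400000 in
lemma finrank_stab_eq_ker (m : ℕ) (S : Submodule 𝕜 (Fin m → L))
    (ξ : (Fin m → L) →ₗ[𝕜] 𝕜) :
    finrank 𝕜 (coadjointStabilizer m S ξ) = finrank 𝕜 (LinearMap.ker (stabMap m S ξ)) := by
  rw [stab_eq_map]
  exact ((Submodule.equivMapOfInjective S.subtype S.injective_subtype
    (LinearMap.ker (stabMap m S ξ))).finrank_eq).symm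

end Aux2

section Semi

open Polynomial Matrix

variable {𝕜 : Type*} [Field 𝕜] [Infinite 𝕜]
variable {V : Type*} [AddCommGroup V] [Module 𝕜 V] [FiniteDimensional 𝕜 V]

/-- Semicontinuity: if the kernel dimension of a polynomial family of bilinear
forms is constant away from `0`, it can only jump up at `0`. -/
lemma finrank_ker_le_of_polynomial
    (T : 𝕜 → V →ₗ[𝕜] (V →ₗ[𝕜] 𝕜)) (P : V → V → Polynomial 𝕜)
    (hP : ∀ t v w, T t v w = (P v w).eval t)
    (hconst : ∀ t t' : 𝕜, t ≠ 0 → t' ≠ 0 →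
      finrank 𝕜 (LinearMap.ker (T t)) = finrank 𝕜 (LinearMap.ker (T t')))
    (t : 𝕜) (ht : t ≠ 0) :
    finrank 𝕜 (LinearMap.ker (T t)) ≤ finrank 𝕜 (LinearMap.ker (T 0)) := by
  by_contra hlt
  push_neg at hlt
  set d := finrank 𝕜 (LinearMap.ker (T t)) with hd
  set d₀ := finrank 𝕜 (LinearMap.ker (T 0)) with hd0
  set s := finrank 𝕜 V with hs
  have hds : d ≤ s := (LinearMap.ker (T t)).finrank_le
  have hrn0 : finrank 𝕜 (LinearMap.range (T 0)) + d₀ = s :=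
    LinearMap.finrank_range_add_finrank_ker (T 0)
  set N := s - d + 1 with hN
  have hNle : N ≤ finrank 𝕜 (LinearMap.range (T 0)) := by omega
  -- a linearly independent family of size N in the range of T 0
  have hinj : Function.Injective (Fin.castLE hNle) := Fin.castLE_injective _
  haveI : Module.Free 𝕜 ↥(LinearMap.range (T 0)) := Module.Free.of_divisionRing 𝕜 ↥(LinearMap.range (T 0))
  set f : Fin N → ↥(LinearMap.range (T 0)) :=
    (finBasis 𝕜 ↥(LinearMap.range (T 0))) ∘ (Fin.castLE hNle) with hf
  have hfli : LinearIndependent 𝕜 f :=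
    (finBasis 𝕜 ↥(LinearMap.range (T 0))).linearIndependent.comp _ hinj
  set g : Fin N → (V →ₗ[𝕜] 𝕜) := fun a => ↑(f a) with hg
  have hgli : LinearIndependent 𝕜 g :=
    hfli.map_injOn (LinearMap.range (T 0)).subtype (LinearMap.range (T 0)).injective_subtype.injOn
  -- preimages
  have hpre : ∀ a, ∃ v : V, T 0 v = g a := fun a => (f a).2
  choose v hv using hpre
  -- dual vectors
  have hw : ∀ c : Fin N, ∃ wc : V, ∀ a, g a wc = if a = c then 1 else 0 := by
    intro c
    obtain ⟨G, hG⟩ := LinearMap.exists_extend ((Basis.span hgli).coord c)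
    refine ⟨(evalEquiv 𝕜 V).symm G, fun a => ?_⟩
    have h1 : g a ((evalEquiv 𝕜 V).symm G) = G (g a) :=
      apply_evalEquiv_symm_apply 𝕜 V (g a) G
    have h2 : G (g a) = ((Basis.span hgli).coord c) ⟨g a, Submodule.subset_span ⟨a, rfl⟩⟩ := by
      have := congrArg (fun F => F ⟨g a, Submodule.subset_span ⟨a, rfl⟩⟩) hG
      simpa using this
    have h3 : (⟨g a, Submodule.subset_span ⟨a, rfl⟩⟩ :
        ↥(Submodule.span 𝕜 (Set.range g))) = Basis.span hgli a := by
      apply Subtype.ext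
      rw [Basis.span_apply]
    rw [h1, h2, h3, Basis.coord_apply, Basis.repr_self, Finsupp.single_apply]
  choose w hwspec using hw
  -- the polynomial determinant
  set M : Matrix (Fin N) (Fin N) (Polynomial 𝕜) := Matrix.of fun a c => P (v a) (w c) with hM
  set Q : Polynomial 𝕜 := M.det with hQ
  have hev : ∀ u : 𝕜, Q.eval u = (Matrix.of fun a c => T u (v a) (w c)).det := by
    intro u
    have := (evalRingHom u).map_det M
    simp only [RingHom.mapMatrix_apply, coe_evalRingHom] at this
    rw [hQ, this]
    congr 1
    ext a c
    simp [hM, hP]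
  have hev0 : Q.eval 0 = 1 := by
    rw [hev 0]
    have : (Matrix.of fun a c => T 0 (v a) (w c)) = (1 : Matrix (Fin N) (Fin N) 𝕜) := by
      ext a c
      rw [Matrix.of_apply, hv a, hwspec c a, Matrix.one_apply]
    rw [this, Matrix.det_one]
  have hQ0 : Q ≠ 0 := fun h => by simp [h] at hev0
  -- a nonzero non-root
  obtain ⟨t₁, ht₁⟩ := (((Polynomial.finite_setOf_isRoot hQ0).union
    (Set.finite_singleton 0))).exists_notMem
  simp only [Set.mem_union, Set.mem_setOf_eq, Set.mem_singleton_iff, not_or] at ht₁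
  obtain ⟨hroot, ht₁0⟩ := ht₁
  -- the family T t₁ (v a) is linearly independent
  set A : Matrix (Fin N) (Fin N) 𝕜 := Matrix.of fun a c => T t₁ (v a) (w c) with hA
  have hdetA : A.det ≠ 0 := by rw [← hev t₁]; exact hroot
  have hli : LinearIndependent 𝕜 (fun a => T t₁ (v a)) := by
    rw [Fintype.linearIndependent_iff]
    intro cc hcc a
    have hvm : cc ᵥ* A = 0 := by
      funext c
      have := congrArg (fun F => F (w c)) hcc
      simpa [Matrix.vecMul, dotProduct, hA] using this
    have hAinv : A * A⁻¹ = 1 := A.mul_nonsing_inv (isUnit_iff_ne_zero.mpr hdetA)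
    calc cc a = (cc ᵥ* 1) a := by simp
    _ = ((cc ᵥ* A) ᵥ* A⁻¹) a := by rw [← hAinv, Matrix.vecMul_vecMul]
    _ = 0 := by rw [hvm]; simp
  -- hence the rank at t₁ is at least N
  have hspan : Submodule.span 𝕜 (Set.range (fun a => T t₁ (v a))) ≤
      LinearMap.range (T t₁) := by
    rw [Submodule.span_le]
    rintro _ ⟨a, rfl⟩
    exact ⟨v a, rfl⟩
  have hrank : N ≤ finrank 𝕜 (LinearMap.range (T t₁)) := by
    have := finrank_span_eq_card hli
    rw [Fintype.card_fin] at this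
    have h2 := Submodule.finrank_mono hspan
    omega
  have hrn1 : finrank 𝕜 (LinearMap.range (T t₁)) + finrank 𝕜 (LinearMap.ker (T t₁)) = s :=
    LinearMap.finrank_range_add_finrank_ker (T t₁)
  have hker1 : finrank 𝕜 (LinearMap.ker (T t₁)) = d := hconst t₁ t ht₁0 ht
  omega

end Semi

section Aux3

open Polynomial

variable {𝕜 L : Type*} [Field 𝕜] [LieRing L] [LieAlgebra 𝕜 L]

/-- The pairing against the scaled functional, as a polynomial in the scaling factor. -/
noncomputable def brPoly (b : L →ₗ[𝕜] L →ₗ[𝕜] 𝕜) (m : ℕ) (η : Fin m → L)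
    (x y : Fin m → L) : Polynomial 𝕜 :=
  ∑ i : Fin m, Polynomial.C (b ((takiffBracket m x y) i) (η i.rev)) *
    Polynomial.X ^ ((i.rev : Fin m) : ℕ)

lemma brPoly_eval (b : L →ₗ[𝕜] L →ₗ[𝕜] 𝕜) (m : ℕ) (η : Fin m → L)
    (x y : Fin m → L) (t : 𝕜) :
    (brPoly b m η x y).eval t =
      pairingFunctional b m (fun j => t ^ (j : ℕ) • η j) (takiffBracket m x y) := by
  simp only [brPoly, pairingFunctional, LinearMap.coe_mk, AddHom.coe_mk,
    eval_finset_sum, eval_mul, eval_C, eval_pow, eval_X, map_smul, smul_eq_mul]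
  exact Finset.sum_congr rfl fun i _ => mul_comm _ _

lemma finrank_stab_le_of_ne_zero [FiniteDimensional 𝕜 L] (m : ℕ) (θ : Module.End 𝕜 L) (ζ : 𝕜)
    (b : L →ₗ[𝕜] L →ₗ[𝕜] 𝕜) (η : Fin m → L) {t t' : 𝕜} (ht : t ≠ 0) (ht' : t' ≠ 0) :
    finrank 𝕜 (coadjointStabilizer m (takiffFixedSubalgebra m θ ζ)
        (pairingFunctional b m (fun j => t ^ (j : ℕ) • η j))) ≤
      finrank 𝕜 (coadjointStabilizer m (takiffFixedSubalgebra m θ ζ)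
        (pairingFunctional b m (fun j => t' ^ (j : ℕ) • η j))) := by
  set c := t * t'⁻¹ with hc
  have hc0 : c ≠ 0 := mul_ne_zero ht (inv_ne_zero ht')
  have hct' : c * t' = t := by rw [hc, mul_assoc, inv_mul_cancel₀ ht', mul_one]
  set Φ : (Fin m → L) ≃ₗ[𝕜] (Fin m → L) :=
    LinearEquiv.piCongrRight
      (fun i : Fin m => LinearEquiv.smulOfNeZero 𝕜 L (c ^ (m - 1 - (i : ℕ)))
        (pow_ne_zero _ hc0)) with hΦ
  have hmap : Submodule.map (Φ : (Fin m → L) →ₗ[𝕜] (Fin m → L)) (coadjointStabilizer m (takiffFixedSubalgebra m θ ζ)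
      (pairingFunctional b m (fun j => t ^ (j : ℕ) • η j))) ≤
      coadjointStabilizer m (takiffFixedSubalgebra m θ ζ)
        (pairingFunctional b m (fun j => t' ^ (j : ℕ) • η j)) := by
    rintro _ ⟨x, hx, rfl⟩
    have hx' : x ∈ coadjointStabilizer m (takiffFixedSubalgebra m θ ζ)
        (pairingFunctional b m (fun j => c ^ (j : ℕ) • (t' ^ (j : ℕ) • η j))) := by
      have : (fun j : Fin m => c ^ (j : ℕ) • (t' ^ (j : ℕ) • η j)) =
          (fun j : Fin m => t ^ (j : ℕ) • η j) := by
        funext j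
        rw [smul_smul, ← mul_pow, hct']
      rw [this]
      exact hx
    have key := stab_rescale m θ ζ b (fun j => t' ^ (j : ℕ) • η j) c x hx'
    have hΦx : (Φ : (Fin m → L) → (Fin m → L)) x =
        fun i : Fin m => c ^ (m - 1 - (i : ℕ)) • x i := by
      funext i
      simp [hΦ, LinearEquiv.smulOfNeZero, LinearEquiv.smulOfUnit, Units.smul_def]
    rw [LinearEquiv.coe_coe, hΦx]
    exact key
  calc finrank 𝕜 (coadjointStabilizer m (takiffFixedSubalgebra m θ ζ)
        (pairingFunctional b m (fun j => t ^ (j : ℕ) • η j)))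
      = finrank 𝕜 (Submodule.map (Φ : (Fin m → L) →ₗ[𝕜] (Fin m → L)) (coadjointStabilizer m (takiffFixedSubalgebra m θ ζ)
        (pairingFunctional b m (fun j => t ^ (j : ℕ) • η j)))) :=
        (LinearEquiv.finrank_map_eq Φ _).symm
    _ ≤ _ := Submodule.finrank_mono hmap

end Aux3



/-- Let `q = g⟨nk⟩₀` with `q^* ≅ g⟨nk⟩₁`, and let
`ξ⃗ = (ξ₁, …, ξ_{nk})` with `ξ_i ∈ g_ī` (encoded by the tuple `η`, `η_j ∈ g_{j+1}`).
If `(x₀, …, x_{nk−1}) ∈ q` stabilises `ξ⃗(t) = (ξ₁, tξ₂, …, t^{nk−1} ξ_{nk})` for some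
`t ≠ 0`, then `(t^{nk−1} x₀, …, x_{nk−1})` stabilises `ξ⃗`.  Consequently, if
`(ξ₁, 0, …, 0) = ξ⃗(0)` is a regular element of `q^*`, then all the `ξ⃗(t)`, including
`ξ⃗ = ξ⃗(1)` itself, are regular elements of `q^*`. -/
theorem scaled_functional_stabilizer_and_regularity
    {𝕜 L : Type*} [Field 𝕜] [CharZero 𝕜] [IsAlgClosed 𝕜]
    [LieRing L] [LieAlgebra 𝕜 L] [FiniteDimensional 𝕜 L]
    (hred : LieAlgebra.radical 𝕜 L = LieAlgebra.center 𝕜 L)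
    (n k : ℕ) (hn : 0 < n) (hk : 0 < k)
    (ζ : 𝕜) (hζ : IsPrimitiveRoot ζ k)
    (θ : Module.End 𝕜 L) (hbr : ∀ x y : L, θ ⁅x, y⁆ = ⁅θ x, θ y⁆)
    (hθk : θ ^ k = 1)
    (b : L →ₗ[𝕜] L →ₗ[𝕜] 𝕜)
    (hsymm : ∀ x y, b x y = b y x)
    (hnondeg : ∀ x, (∀ y, b x y = 0) → x = 0)
    (hinv : ∀ x y z, b ⁅x, y⁆ z = b x ⁅y, z⁆)
    (hbθ : ∀ x y, b (θ x) (θ y) = b x y)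
    (η : Fin (n * k) → L)
    (hη : ∀ j : Fin (n * k), θ (η j) = ζ ^ ((j : ℕ) + 1) • η j) :
    -- rescaling of stabilisers
    (∀ (t : 𝕜), t ≠ 0 → ∀ v : Fin (n * k) → L,
      v ∈ coadjointStabilizer (n * k) (takiffFixedSubalgebra (n * k) θ ζ)
        (pairingFunctional b (n * k) (fun j => t ^ (j : ℕ) • η j)) →
      (fun i : Fin (n * k) => t ^ (n * k - 1 - (i : ℕ)) • v i) ∈
        coadjointStabilizer (n * k) (takiffFixedSubalgebra (n * k) θ ζ)
          (pairingFunctional b (n * k) η)) ∧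
    -- consequence for regularity
    (IsCoadjointRegular (n * k) (takiffFixedSubalgebra (n * k) θ ζ)
        (pairingFunctional b (n * k) (fun j => (0 : 𝕜) ^ (j : ℕ) • η j)) →
      ∀ t : 𝕜, IsCoadjointRegular (n * k) (takiffFixedSubalgebra (n * k) θ ζ)
        (pairingFunctional b (n * k) (fun j => t ^ (j : ℕ) • η j))) := by
  constructor
  · intro t _ v hv
    exact stab_rescale (n * k) θ ζ b η t v hv
  · intro hreg t
    by_cases ht : t = 0
    · subst ht
      exact hreg
    · -- semicontinuity
      have hsemi : finrank 𝕜 (coadjointStabilizer (n * k) (takiffFixedSubalgebra (n * k) θ ζ)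
            (pairingFunctional b (n * k) (fun j => t ^ (j : ℕ) • η j))) ≤
          finrank 𝕜 (coadjointStabilizer (n * k) (takiffFixedSubalgebra (n * k) θ ζ)
            (pairingFunctional b (n * k) (fun j => (0 : 𝕜) ^ (j : ℕ) • η j))) := by
        rw [finrank_stab_eq_ker, finrank_stab_eq_ker]
        refine finrank_ker_le_of_polynomial
          (fun u => stabMap (n * k) (takiffFixedSubalgebra (n * k) θ ζ) (pairingFunctional b (n * k) (fun j => u ^ (j : ℕ) • η j)))
          (fun v w => brPoly b (n * k) η ↑v ↑w) ?_ ?_ t ht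
        · intro u v w
          rw [stabMap_apply, brPoly_eval]
        · intro u u' hu hu'
          rw [← finrank_stab_eq_ker, ← finrank_stab_eq_ker]
          exact le_antisymm (finrank_stab_le_of_ne_zero (n * k) θ ζ b η hu hu')
            (finrank_stab_le_of_ne_zero (n * k) θ ζ b η hu' hu)
      intro ξ'
      exact le_trans hsemi (hreg ξ')
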